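/- Let G be a standard real Gaussian random variable, and let Ξ > 0 and λ ≥ 0. Then E[ST(ΞG; λ)²] = 2Q(λ/Ξ)·(Ξ² + λ²) − (2Ξλ/√(2π))·exp(−λ²/(2Ξ²)). -/

import Mathlib

open MeasureTheory ProbabilityTheory Real Set Filter
open scoped NNReal ENNReal

/-- The soft-thresholding operator `softThr(x; c)`. -/
noncomputable def softThr (x c : ℝ) : ℝ :=
  if c < x then x - c else if x < -c then x + c else 0

/-- Gaussian tail probability `Q(t) = P(G > t)` for a standard Gaussian `G`. -/
noncomputable def gaussQ (t : ℝ) : ℝ := (gaussianReal 0 1 {x | t < x}).toReal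

private lemma exp_form : ∀ x : ℝ, -x ^ 2 / 2 = -((1:ℝ)/2) * x ^ 2 := fun x => by ring

private lemma int_exp_full : Integrable (fun x : ℝ => Real.exp (-x ^ 2 / 2)) := by
  have := integrable_exp_neg_mul_sq (b := (1:ℝ)/2) (by norm_num)
  exact this.congr (ae_of_all _ fun x => by simp only [exp_form])

private lemma int_mul_exp : Integrable (fun x : ℝ => x * Real.exp (-x ^ 2 / 2)) := by
  have := integrable_mul_exp_neg_mul_sq (b := (1:ℝ)/2) (by norm_num)
  exact this.congr (ae_of_all _ fun x => by simp only [exp_form])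

private lemma int_sq_exp : Integrable (fun x : ℝ => x ^ 2 * Real.exp (-x ^ 2 / 2)) := by
  have h := integrable_rpow_mul_exp_neg_mul_sq (b := (1:ℝ)/2) (by norm_num) (s := 2)
    (by norm_num)
  refine h.congr (ae_of_all _ fun x => ?_)
  simp only [Real.rpow_two, exp_form]

private lemma int_poly (a b c : ℝ) :
    Integrable (fun x : ℝ => (a * x ^ 2 + b * x + c) * Real.exp (-x ^ 2 / 2)) := by
  have := ((int_sq_exp.const_mul a).add (int_mul_exp.const_mul b)).add
    (int_exp_full.const_mul c)
  exact this.congr (ae_of_all _ fun x => by simp only [Pi.add_apply]; ring)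

private lemma tendsto_exp_gauss :
    Tendsto (fun x : ℝ => Real.exp (-x ^ 2 / 2)) atTop (nhds 0) := by
  apply Real.tendsto_exp_atBot.comp
  have h : Tendsto (fun x : ℝ => x ^ 2 / 2) atTop atTop :=
    (tendsto_pow_atTop (two_ne_zero)).atTop_div_const (by norm_num)
  have := tendsto_neg_atTop_atBot.comp h
  refine this.congr fun x => ?_
  simp [neg_div]

private lemma tendsto_mul_exp_gauss :
    Tendsto (fun x : ℝ => x * Real.exp (-x ^ 2 / 2)) atTop (nhds 0) := by
  have h := rpow_mul_exp_neg_mul_sq_isLittleO_exp_neg (b := (1:ℝ)/2) (by norm_num) 1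
  have h2 : Tendsto (fun x : ℝ => Real.exp (-(1/2 : ℝ) * x)) atTop (nhds 0) := by
    apply Real.tendsto_exp_atBot.comp
    have := tendsto_neg_atTop_atBot.comp
      ((tendsto_id (α := ℝ)).atTop_div_const (show (0:ℝ) < 2 by norm_num))
    refine this.congr fun x => ?_
    simp [neg_div]; ring
  have := h.tendsto_zero_of_tendsto h2
  refine this.congr fun x => ?_
  rw [Real.rpow_one, exp_form]

private lemma J1_eq (t : ℝ) :
    ∫ x in Ioi t, x * Real.exp (-x ^ 2 / 2) = Real.exp (-t ^ 2 / 2) := by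
  have hderiv : ∀ x ∈ Ici t, HasDerivAt (fun y : ℝ => -Real.exp (-y ^ 2 / 2))
      (x * Real.exp (-x ^ 2 / 2)) x := by
    intro x _
    have h1 : HasDerivAt (fun y : ℝ => -y ^ 2 / 2) (-x) x := by
      have := ((hasDerivAt_pow 2 x).neg).div_const 2
      refine this.congr_deriv ?_
      simp; ring
    have h2 := (h1.exp).neg
    refine h2.congr_deriv ?_
    ring
  have := integral_Ioi_of_hasDerivAt_of_tendsto' hderiv int_mul_exp.integrableOn
    (by simpa using tendsto_exp_gauss.neg)
  simpa using this

private lemma J2_eq (t : ℝ) :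
    ∫ x in Ioi t, x ^ 2 * Real.exp (-x ^ 2 / 2)
      = t * Real.exp (-t ^ 2 / 2) + ∫ x in Ioi t, Real.exp (-x ^ 2 / 2) := by
  have hderiv : ∀ x ∈ Ici t, HasDerivAt (fun y : ℝ => -y * Real.exp (-y ^ 2 / 2))
      ((x ^ 2 - 1) * Real.exp (-x ^ 2 / 2)) x := by
    intro x _
    have h1 : HasDerivAt (fun y : ℝ => -y ^ 2 / 2) (-x) x := by
      have := ((hasDerivAt_pow 2 x).neg).div_const 2
      refine this.congr_deriv ?_
      simp; ring
    have h2 := ((hasDerivAt_id x).neg).mul h1.exp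
    refine h2.congr_deriv ?_
    simp only [Pi.neg_apply, id_eq]
    ring
  have hint : Integrable (fun x : ℝ => (x ^ 2 - 1) * Real.exp (-x ^ 2 / 2)) :=
    (int_sq_exp.sub int_exp_full).congr (ae_of_all _ fun x => by simp only [Pi.sub_apply]; ring)
  have htend : Tendsto (fun y : ℝ => -y * Real.exp (-y ^ 2 / 2)) atTop (nhds 0) := by
    have := tendsto_mul_exp_gauss.neg
    simpa [neg_mul] using this
  have hmain := integral_Ioi_of_hasDerivAt_of_tendsto' hderiv hint.integrableOn htend
  have hsub : ∫ x in Ioi t, (x ^ 2 - 1) * Real.exp (-x ^ 2 / 2)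
      = (∫ x in Ioi t, x ^ 2 * Real.exp (-x ^ 2 / 2))
        - ∫ x in Ioi t, Real.exp (-x ^ 2 / 2) := by
    rw [← integral_sub int_sq_exp.integrableOn int_exp_full.integrableOn]
    exact setIntegral_congr_fun (measurableSet_Ioi) fun x _ => by ring
  rw [hsub] at hmain
  have : (0 : ℝ) - (-t * Real.exp (-t ^ 2 / 2)) = t * Real.exp (-t ^ 2 / 2) := by ring
  rw [this] at hmain
  linarith

private lemma pdf_eq (x : ℝ) :
    gaussianPDFReal 0 1 x = (Real.sqrt (2 * Real.pi))⁻¹ * Real.exp (-x ^ 2 / 2) := by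
  simp [gaussianPDFReal]

private lemma gaussQ_eq (t : ℝ) :
    gaussQ t = (Real.sqrt (2 * Real.pi))⁻¹ * ∫ x in Ioi t, Real.exp (-x ^ 2 / 2) := by
  rw [gaussQ, show {x : ℝ | t < x} = Ioi t from rfl,
    gaussianReal_apply_eq_integral 0 one_ne_zero, ENNReal.toReal_ofReal
    (integral_nonneg fun x => gaussianPDFReal_nonneg _ _ _)]
  rw [← integral_const_mul]
  exact setIntegral_congr_fun (measurableSet_Ioi) fun x _ => pdf_eq x

private lemma integral_gaussianReal_std (f : ℝ → ℝ) :
    ∫ x, f x ∂(gaussianReal 0 1) = ∫ x, gaussianPDFReal 0 1 x * f x := by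
  rw [gaussianReal_of_var_ne_zero 0 one_ne_zero]
  have h1 : gaussianPDF 0 1 = fun x => ((Real.toNNReal (gaussianPDFReal 0 1 x) : ℝ≥0) : ℝ≥0∞) :=
    rfl
  rw [h1, integral_withDensity_eq_integral_smul (measurable_gaussianPDFReal 0 1).real_toNNReal f]
  refine integral_congr_ae (ae_of_all _ fun x => ?_)
  simp [NNReal.smul_def, Real.coe_toNNReal _ (gaussianPDFReal_nonneg 0 1 x)]

theorem stmt13 (Ξ lam : ℝ) (hΞ : 0 < Ξ) (hlam : 0 ≤ lam) :
    ∫ g : ℝ, (softThr (Ξ * g) lam) ^ 2 ∂(gaussianReal 0 1)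
      = 2 * gaussQ (lam / Ξ) * (Ξ ^ 2 + lam ^ 2)
        - (2 * Ξ * lam / Real.sqrt (2 * Real.pi)) * Real.exp (-lam ^ 2 / (2 * Ξ ^ 2)) := by
  set t : ℝ := lam / Ξ with ht_def
  have ht : 0 ≤ t := div_nonneg hlam hΞ.le
  set c : ℝ := (Real.sqrt (2 * Real.pi))⁻¹ with hc_def
  have hsqrt_pos : 0 < Real.sqrt (2 * Real.pi) :=
    Real.sqrt_pos.mpr (by positivity)
  -- integrable pieces
  have hintP : ∀ a b : ℝ, Integrable (fun x : ℝ => gaussianPDFReal 0 1 x * (a * x + b) ^ 2) := by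
    intro a b
    refine (int_poly (c * a ^ 2) (c * (2 * a * b)) (c * b ^ 2)).congr (ae_of_all _ fun x => ?_)
    simp only [pdf_eq]; ring
  -- pointwise decomposition
  have key : ∀ x : ℝ, gaussianPDFReal 0 1 x * softThr (Ξ * x) lam ^ 2
      = (Ioi t).indicator (fun x => gaussianPDFReal 0 1 x * (Ξ * x - lam) ^ 2) x
        + (Iio (-t)).indicator (fun x => gaussianPDFReal 0 1 x * (Ξ * x + lam) ^ 2) x := by
    intro x
    have hiff1 : t < x ↔ lam < Ξ * x := by
      rw [ht_def, div_lt_iff₀ hΞ, mul_comm]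
    have hiff2 : x < -t ↔ Ξ * x < -lam := by
      rw [ht_def, ← neg_div, lt_div_iff₀ hΞ, mul_comm]
    by_cases h1 : t < x
    · have hx2 : ¬ x < -t := by
        push_neg; linarith
      rw [Set.indicator_of_mem (show x ∈ Ioi t from h1),
        Set.indicator_of_notMem (show x ∉ Iio (-t) by simpa using hx2), softThr,
        if_pos (hiff1.mp h1)]
      ring
    · by_cases h2 : x < -t
      · rw [Set.indicator_of_notMem (show x ∉ Ioi t by simpa using h1),
          Set.indicator_of_mem (show x ∈ Iio (-t) from h2), softThr,
          if_neg (by rw [← hiff1]; exact h1), if_pos (hiff2.mp h2)]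
        ring
      · rw [Set.indicator_of_notMem (show x ∉ Ioi t by simpa using h1),
          Set.indicator_of_notMem (show x ∉ Iio (-t) by simpa using h2),
          softThr, if_neg (by rw [← hiff1]; exact h1), if_neg (by rw [← hiff2]; exact h2)]
        ring
  -- pass to Lebesgue integral
  rw [integral_gaussianReal_std]
  have hsplit : ∫ x : ℝ, gaussianPDFReal 0 1 x * softThr (Ξ * x) lam ^ 2
      = (∫ x in Ioi t, gaussianPDFReal 0 1 x * (Ξ * x - lam) ^ 2)
        + ∫ x in Iio (-t), gaussianPDFReal 0 1 x * (Ξ * x + lam) ^ 2 := by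
    rw [integral_congr_ae (ae_of_all _ key), integral_add
      (((hintP Ξ (-lam)).congr (ae_of_all _ fun x => by ring)).indicator measurableSet_Ioi)
      ((hintP Ξ lam).indicator measurableSet_Iio),
      integral_indicator measurableSet_Ioi, integral_indicator measurableSet_Iio]
  -- reflection: the negative-side integral equals the positive-side one
  have hrefl : ∫ x in Iio (-t), gaussianPDFReal 0 1 x * (Ξ * x + lam) ^ 2
      = ∫ x in Ioi t, gaussianPDFReal 0 1 x * (Ξ * x - lam) ^ 2 := by
    rw [← integral_Iic_eq_integral_Iio, ← integral_comp_neg_Ioi]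
    refine setIntegral_congr_fun (measurableSet_Ioi) fun x _ => ?_
    rw [pdf_eq, pdf_eq, show (-x : ℝ) ^ 2 = x ^ 2 by ring]
    ring
  -- evaluate the positive-side integral
  set J0 : ℝ := ∫ x in Ioi t, Real.exp (-x ^ 2 / 2) with hJ0
  have hA : ∫ x in Ioi t, gaussianPDFReal 0 1 x * (Ξ * x - lam) ^ 2
      = c * Ξ ^ 2 * (∫ x in Ioi t, x ^ 2 * Real.exp (-x ^ 2 / 2))
        + (c * (-2 * Ξ * lam)) * (∫ x in Ioi t, x * Real.exp (-x ^ 2 / 2))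
        + (c * lam ^ 2) * J0 := by
    have expand : EqOn (fun x : ℝ => gaussianPDFReal 0 1 x * (Ξ * x - lam) ^ 2)
        (fun x : ℝ => (c * Ξ ^ 2) * (x ^ 2 * Real.exp (-x ^ 2 / 2))
          + ((c * (-2 * Ξ * lam)) * (x * Real.exp (-x ^ 2 / 2))
            + (c * lam ^ 2) * Real.exp (-x ^ 2 / 2))) (Ioi t) := by
      intro x _
      simp only [pdf_eq]; ring
    have hI2 : IntegrableOn (fun x : ℝ => c * Ξ ^ 2 * (x ^ 2 * Real.exp (-x ^ 2 / 2)))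
        (Ioi t) := int_sq_exp.integrableOn.const_mul _
    have hI1 : IntegrableOn (fun x : ℝ => c * (-2 * Ξ * lam) * (x * Real.exp (-x ^ 2 / 2)))
        (Ioi t) := int_mul_exp.integrableOn.const_mul _
    have hI0 : IntegrableOn (fun x : ℝ => c * lam ^ 2 * Real.exp (-x ^ 2 / 2))
        (Ioi t) := int_exp_full.integrableOn.const_mul _
    have hI10 : IntegrableOn (fun x : ℝ => c * (-2 * Ξ * lam) * (x * Real.exp (-x ^ 2 / 2))
        + c * lam ^ 2 * Real.exp (-x ^ 2 / 2)) (Ioi t) := hI1.add hI0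
    rw [setIntegral_congr_fun measurableSet_Ioi expand,
      integral_add hI2 hI10, integral_add hI1 hI0,
      integral_const_mul, integral_const_mul, integral_const_mul, ← hJ0]
    ring
  rw [hsplit, hrefl, hA, J1_eq, J2_eq]
  rw [gaussQ_eq, ← hJ0, ← hc_def]
  have hE : Real.exp (-t ^ 2 / 2) = Real.exp (-lam ^ 2 / (2 * Ξ ^ 2)) := by
    congr 1
    rw [ht_def]
    ring
  rw [hE]
  have ht2 : Ξ ^ 2 * t = Ξ * lam := by
    rw [ht_def]; field_simp [hΞ.ne']
  have hdiv : 2 * Ξ * lam / Real.sqrt (2 * Real.pi) = 2 * Ξ * lam * c := by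
    rw [hc_def, div_eq_mul_inv]
  rw [hdiv]
  linear_combination (2 * c * Real.exp (-lam ^ 2 / (2 * Ξ ^ 2))) * ht2
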